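/- Let A1, ..., A_{n+1} be affinely independent points in Euclidean space ℝ^n and let P, Q be points with barycentric coordinates (p_1,...,p_{n+1}) and (q_1,...,q_{n+1}) with respect to (A1,...,A_{n+1}) (so Σp_i = Σq_i = 1, P = Σ p_i A_i, Q = Σ q_i A_i). Then the squared Euclidean distance satisfies dist(P,Q)^2 = - Σ_{1 ≤ i < j ≤ n+1} dist(A_i,A_j)^2 (p_i - q_i)(p_j - q_j). -/

import Mathlib

open Finset

lemma half_double_sum {m : ℕ} (f : Fin m → Fin m → ℝ) (hsym : ∀ i j, f i j = f j i)
    (hdiag : ∀ i, f i i = 0) :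
    ∑ i, ∑ j, f i j = 2 * ∑ i, ∑ j ∈ Finset.univ.filter (fun j => i < j), f i j := by
  have h1 : ∀ i : Fin m, ∑ j, f i j =
      ∑ j ∈ Finset.univ.filter (fun j => i < j), f i j +
      ∑ j ∈ Finset.univ.filter (fun j => j < i), f i j := by
    intro i
    rw [← Finset.sum_filter_add_sum_filter_not Finset.univ (fun j => i < j)]
    congr 1
    have hset : Finset.univ.filter (fun j => ¬ i < j) =
        insert i (Finset.univ.filter (fun j => j < i)) := by
      ext j
      simp only [Finset.mem_filter, Finset.mem_univ, true_and, Finset.mem_insert, not_lt]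
      constructor
      · intro h
        rcases lt_or_eq_of_le h with h | h
        · exact Or.inr h
        · exact Or.inl h
      · rintro (rfl | h)
        · exact le_refl _
        · exact le_of_lt h
    rw [hset, Finset.sum_insert (by simp), hdiag, zero_add]
  have h2 : ∑ i, ∑ j ∈ Finset.univ.filter (fun j => j < i), f i j =
      ∑ i, ∑ j ∈ Finset.univ.filter (fun j => i < j), f i j := by
    have : ∑ i, ∑ j ∈ Finset.univ.filter (fun j => j < i), f j i =
        ∑ j, ∑ i ∈ Finset.univ.filter (fun i => j < i), f j i :=
      Finset.sum_comm' (by intro x y; simp [and_comm])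
    simpa only [fun i j => hsym i j] using this
  calc ∑ i, ∑ j, f i j
      = ∑ i, (∑ j ∈ Finset.univ.filter (fun j => i < j), f i j +
          ∑ j ∈ Finset.univ.filter (fun j => j < i), f i j) := by
        exact Finset.sum_congr rfl fun i _ => h1 i
    _ = 2 * ∑ i, ∑ j ∈ Finset.univ.filter (fun j => i < j), f i j := by
        rw [Finset.sum_add_distrib, h2]; ring

theorem barycentric_distance_formula (n : ℕ) (hn : 1 < n)
    (A : Fin (n + 1) → EuclideanSpace ℝ (Fin n)) (hA : AffineIndependent ℝ A)
    (p q : Fin (n + 1) → ℝ)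
    (hp : ∑ i, p i = 1) (hq : ∑ i, q i = 1)
    (P Q : EuclideanSpace ℝ (Fin n))
    (hP : P = ∑ i, p i • A i) (hQ : Q = ∑ i, q i • A i) :
    dist P Q ^ 2 =
      -∑ i, ∑ j ∈ Finset.univ.filter (fun j => i < j),
        dist (A i) (A j) ^ 2 * (p i - q i) * (p j - q j) := by
  have key := EuclideanGeometry.dist_affineCombination (s := Finset.univ) A hp hq
  dsimp only at key
  rw [Finset.affineCombination_eq_linear_combination Finset.univ A p hp,
    Finset.affineCombination_eq_linear_combination Finset.univ A q hq, ← hP, ← hQ] at key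
  have hhalf := half_double_sum
      (fun i j => dist (A i) (A j) ^ 2 * (p i - q i) * (p j - q j))
      (fun i j => by rw [dist_comm (A i) (A j)]; ring) (fun i => by simp)
  have hconv : ∑ i, ∑ j, (p - q) i * (p - q) j * (dist (A i) (A j) * dist (A i) (A j)) =
      ∑ i, ∑ j, dist (A i) (A j) ^ 2 * (p i - q i) * (p j - q j) := by
    refine Finset.sum_congr rfl fun i _ => Finset.sum_congr rfl fun j _ => ?_
    simp only [Pi.sub_apply]; ring
  rw [hconv, hhalf] at key
  rw [pow_two, key]
  ring
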